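/- arXiv:1705.05182 — 2 statements merged into one kernel-verified Lean document; each statement's English description precedes it below -/
import Mathlib

section
/- Let N ≥ 3, and for R > 0 set A = (R(R+1))^{N−2}/((R+1)^{N−2} − R^{N−2}), B = (R+1)^{N−2}/((R+1)^{N−2} − R^{N−2}), and q_R(t) = (N−2)^{−2} · A^{2/(N−2)} · (B − t)^{−2(N−1)/(N−2)} for t ∈ [0,1]. Then q_R(t) → 1 as R → +∞, uniformly in t ∈ [0,1]. -/
open Real Filter Finset Topology

theorem stmt9 (N : ℕ) (hN : 3 ≤ N) :
    ∀ ε > (0 : ℝ), ∃ R₀ : ℝ, ∀ R ≥ R₀, ∀ t ∈ Set.Icc (0 : ℝ) 1,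
      |(1 / ((N : ℝ) - 2) ^ 2) *
          ((R * (R + 1)) ^ (N - 2) / ((R + 1) ^ (N - 2) - R ^ (N - 2)))
            ^ ((2 : ℝ) / ((N : ℝ) - 2)) *
          ((R + 1) ^ (N - 2) / ((R + 1) ^ (N - 2) - R ^ (N - 2)) - t)
            ^ (-(2 * ((N : ℝ) - 1)) / ((N : ℝ) - 2)) - 1| < ε := by
  intro ε hε
  set n := N - 2 with hn_def
  have hn0 : n ≠ 0 := by omega
  have hns : ((n : ℝ)) = (N : ℝ) - 2 := by
    have h2 : (2:ℕ) ≤ N := by omega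
    rw [hn_def]
    push_cast [Nat.cast_sub h2]
    ring
  set s : ℝ := (N : ℝ) - 2 with hs_def
  have hs : (0:ℝ) < s := by
    rw [← hns]
    exact_mod_cast Nat.pos_of_ne_zero hn0
  have hN3 : (3:ℝ) ≤ (N:ℝ) := by exact_mod_cast hN
  set p : ℝ := -(2 * ((N : ℝ) - 1)) / s with hp_def
  have hp_nonpos : p ≤ 0 := by
    rw [hp_def]
    apply div_nonpos_of_nonpos_of_nonneg
    · nlinarith
    · linarith
  set F : ℝ → ℝ := fun R => ∑ i ∈ range n, (1 + 1/R)^i with hF_def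
  -- key identity for D
  have hRD : ∀ R : ℝ, 0 < R → R * ((R+1)^n - R^n) = R^n * F R := by
    intro R hR
    have hg := geom_sum_mul (1 + 1/R) n
    rw [show (1+1/R) - 1 = 1/R by ring] at hg
    have h2 : (1+1/R)^n = F R * (1/R) + 1 := by rw [hF_def]; linarith [hg]
    have hR1 : R * (1 + 1/R) = R + 1 := by field_simp
    rw [← hR1, mul_pow, h2]
    field_simp
    ring
  -- key rpow computation
  have key : ∀ R : ℝ, 1 ≤ R → ∀ a : ℝ, 0 < a →
      1 / s^2 * ((R*(R+1))^n / ((R+1)^n - R^n)) ^ ((2:ℝ)/s) *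
        (a^n / ((R+1)^n - R^n)) ^ p
      = (R*(R+1)*((R+1)^n - R^n) / (s * a^(n+1)))^2 := by
    intro R hR a ha
    have hR0 : (0:ℝ) < R := lt_of_lt_of_le one_pos hR
    have hD : (0:ℝ) < (R+1)^n - R^n := by
      have := pow_lt_pow_left₀ (show R < R+1 by linarith) hR0.le hn0
      linarith
    set D := (R+1)^n - R^n with hD_def
    have hP : (0:ℝ) < R*(R+1) := by positivity
    rw [Real.div_rpow (by positivity) hD.le, Real.div_rpow (by positivity) hD.le]
    have e1 : (((R*(R+1))^n : ℝ)) ^ ((2:ℝ)/s) = (R*(R+1))^2 := by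
      rw [← Real.rpow_natCast (R*(R+1)) n, ← Real.rpow_mul hP.le]
      rw [show (n:ℝ) * ((2:ℝ)/s) = ((2:ℕ):ℝ) by rw [hns]; push_cast; field_simp]
      exact Real.rpow_natCast _ 2
    have e2 : ((a^n : ℝ)) ^ p = (a ^ (2*(n+1)))⁻¹ := by
      rw [← Real.rpow_natCast a n, ← Real.rpow_mul ha.le]
      rw [show (n:ℝ) * p = -(((2*(n+1):ℕ)):ℝ) by
        have hsne : (N:ℝ) - 2 ≠ 0 := by linarith
        push_cast
        rw [hns, hp_def, hs_def]
        field_simp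
        ring]
      rw [Real.rpow_neg ha.le, Real.rpow_natCast]
    have e3 : D ^ ((2:ℝ)/s) * D ^ p = (D^2)⁻¹ := by
      rw [← Real.rpow_add hD]
      rw [show (2:ℝ)/s + p = -(((2:ℕ)):ℝ) by
        rw [hp_def]
        rw [show (N:ℝ) - 1 = s + 1 by rw [hs_def]; ring]
        push_cast; field_simp; ring]
      rw [Real.rpow_neg hD.le, Real.rpow_natCast]
    rw [e1, e2]
    have hD1 : (0:ℝ) < D^((2:ℝ)/s) := Real.rpow_pos_of_pos hD _
    have hD2 : (0:ℝ) < D^p := Real.rpow_pos_of_pos hD _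
    have comb : ((R*(R+1))^2 / D^((2:ℝ)/s)) * ((a^(2*(n+1)))⁻¹ / D^p)
        = (R*(R+1))^2 * (a^(2*(n+1)))⁻¹ * D^2 := by
      rw [div_mul_div_comm, e3, div_eq_mul_inv, inv_inv]
    rw [mul_assoc, comb]
    rw [show a ^ (2*(n+1)) = (a^(n+1))^2 by rw [mul_comm, pow_mul]]
    field_simp
  -- limits
  have hinv : Tendsto (fun R : ℝ => 1 / R) atTop (𝓝 0) := by
    simpa [one_div] using tendsto_inv_atTop_zero
  have h1R : Tendsto (fun R : ℝ => 1 + 1 / R) atTop (𝓝 1) := by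
    simpa using tendsto_const_nhds.add hinv
  have hF : Tendsto F atTop (𝓝 (n : ℝ)) := by
    have := tendsto_finset_sum (range n) (fun i (_ : i ∈ range n) => h1R.pow i)
    simpa [hF_def] using this
  have hfrac : Tendsto (fun R : ℝ => R / (R+1)) atTop (𝓝 1) := by
    have h3 : Tendsto (fun R : ℝ => 1/(R+1)) atTop (𝓝 0) :=
      hinv.comp (tendsto_atTop_add_const_right atTop 1 tendsto_id)
    have h2 : Tendsto (fun R : ℝ => 1 - 1/(R+1)) atTop (𝓝 1) := by
      simpa using tendsto_const_nhds.sub h3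
    apply Filter.Tendsto.congr' _ h2
    filter_upwards [eventually_ge_atTop (1:ℝ)] with R hR
    have hne : R + 1 ≠ 0 := by linarith
    field_simp
    ring
  have hbase0 : Tendsto (fun R : ℝ => F R * (R/(R+1))^n / s) atTop (𝓝 1) := by
    have h := (hF.mul (hfrac.pow n)).div_const s
    have hv : (n:ℝ) * 1^n / s = 1 := by rw [hns]; simp [hs.ne']
    rwa [hv] at h
  have hbase1 : Tendsto (fun R : ℝ => (1 + 1/R) * F R / s) atTop (𝓝 1) := by
    have h := (h1R.mul hF).div_const s
    have hv : (1:ℝ) * (n:ℝ) / s = 1 := by rw [hns]; simp [hs.ne']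
    rwa [hv] at h
  have htq0 : Tendsto (fun R : ℝ => (F R * (R/(R+1))^n / s)^2) atTop (𝓝 1) := by
    simpa using hbase0.pow 2
  have htq1 : Tendsto (fun R : ℝ => ((1 + 1/R) * F R / s)^2) atTop (𝓝 1) := by
    simpa using hbase1.pow 2
  have h0 := (Metric.tendsto_nhds.mp htq0) ε hε
  have h1 := (Metric.tendsto_nhds.mp htq1) ε hε
  simp only [Real.dist_eq] at h0 h1
  rw [eventually_atTop] at h0 h1
  obtain ⟨r0, hr0⟩ := h0
  obtain ⟨r1, hr1⟩ := h1
  refine ⟨max (max r0 r1) 1, fun R hR t ht => ?_⟩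
  have hR1 : (1:ℝ) ≤ R := le_trans (le_max_right _ _) hR
  have hR0 : (0:ℝ) < R := lt_of_lt_of_le one_pos hR1
  have hq0 := hr0 R (le_trans (le_trans (le_max_left _ _) (le_max_left _ _)) hR)
  have hq1 := hr1 R (le_trans (le_trans (le_max_right _ _) (le_max_left _ _)) hR)
  have hD : (0:ℝ) < (R+1)^n - R^n := by
    have := pow_lt_pow_left₀ (show R < R+1 by linarith) hR0.le hn0
    linarith
  have hB1 : (R+1)^n / ((R+1)^n - R^n) - 1 = R^n / ((R+1)^n - R^n) := by
    field_simp
    ring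
  have hB1pos : (0:ℝ) < (R+1)^n / ((R+1)^n - R^n) - 1 := by
    rw [hB1]; positivity
  have hBtpos : (0:ℝ) < (R+1)^n / ((R+1)^n - R^n) - t := by
    have := ht.2; linarith
  have hC : (0:ℝ) ≤ 1 / s^2 * ((R*(R+1))^n / ((R+1)^n - R^n)) ^ ((2:ℝ)/s) := by
    positivity
  -- identities at endpoints
  have hrd := hRD R hR0
  have hRn : (R:ℝ)^n ≠ 0 := by positivity
  have hFval : F R = R * ((R+1)^n - R^n) / R^n := by
    rw [eq_div_iff hRn]
    linear_combination -hrd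
  have id0 : 1 / s^2 * ((R*(R+1))^n / ((R+1)^n - R^n)) ^ ((2:ℝ)/s) *
      ((R+1)^n / ((R+1)^n - R^n)) ^ p = (F R * (R/(R+1))^n / s)^2 := by
    rw [key R hR1 (R+1) (by linarith)]
    congr 1
    rw [hFval, div_pow]
    field_simp
    ring
  have id1 : 1 / s^2 * ((R*(R+1))^n / ((R+1)^n - R^n)) ^ ((2:ℝ)/s) *
      (R^n / ((R+1)^n - R^n)) ^ p = ((1 + 1/R) * F R / s)^2 := by
    rw [key R hR1 R hR0]
    congr 1
    rw [hFval]
    field_simp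
    ring
  -- monotone bounds
  have hub : ((R+1)^n / ((R+1)^n - R^n) - t) ^ p
      ≤ ((R+1)^n / ((R+1)^n - R^n) - 1) ^ p := by
    apply Real.rpow_le_rpow_of_nonpos hB1pos (by linarith [ht.2]) hp_nonpos
  have hlb : ((R+1)^n / ((R+1)^n - R^n)) ^ p
      ≤ ((R+1)^n / ((R+1)^n - R^n) - t) ^ p := by
    have h0t := ht.1
    have : (R+1)^n / ((R+1)^n - R^n) - t ≤ (R+1)^n / ((R+1)^n - R^n) - 0 := by
      linarith
    simpa using Real.rpow_le_rpow_of_nonpos hBtpos (by simpa using this) hp_nonpos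
  have hEub := mul_le_mul_of_nonneg_left hub hC
  have hElb := mul_le_mul_of_nonneg_left hlb hC
  rw [mul_assoc, mul_assoc] at hEub hElb
  rw [← mul_assoc, ← mul_assoc] at hEub hElb
  rw [id0] at hElb
  rw [hB1, id1] at hEub
  rw [abs_lt] at hq0 hq1 ⊢
  constructor
  · linarith [hq0.1, hElb]
  · linarith [hq1.2, hEub]
end

section
/- Let r ≥ 1 be a natural number, p = r+1, N = 2r+1, and λ_k(R, R+1) the k-th eigenvalue of (|v'|^{p−2}v')' + λ q_R(t) |v|^{p−2}v = 0 on (0,1), v(0)=v(1)=0, with q_R(t) = (R²+R)^{r+1}/(R+1−t)^{2(r+1)}. Assuming Zhang's estimate (kπ_p/∫₀¹max{1,q_R})^p ≤ λ_k(R,R+1) ≤ (kπ_p/∫₀¹min{1,q_R})^p, one has lim_{R→+∞} λ_k(R, R+1) = (kπ_{r+1})^{r+1}. -/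
open Filter Real

private lemma aux_tendsto19 : Tendsto (fun R : ℝ => (R + 1) / R) atTop (nhds 1) := by
  have h : Tendsto (fun R : ℝ => 1 + R⁻¹) atTop (nhds (1 + 0)) :=
    tendsto_const_nhds.add tendsto_inv_atTop_zero
  simp only [add_zero] at h
  refine h.congr' ?_
  filter_upwards [eventually_ne_atTop (0:ℝ)] with R hR
  field_simp

theorem stmt19 (r : ℕ) (hr : 1 ≤ r) (k : ℕ) (hk : 1 ≤ k)
    (πp : ℝ)
    (hπp : πp = 2 * Real.pi * ((r + 1 : ℝ) - 1) ^ ((1 : ℝ) / (r + 1 : ℝ)) /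
      ((r + 1 : ℝ) * Real.sin (Real.pi / (r + 1 : ℝ))))
    (lam : ℝ → ℝ)
    (hZhang : ∀ R > (0 : ℝ),
      ((k : ℝ) * πp /
          ∫ t in (0:ℝ)..1, max 1 ((R ^ 2 + R) ^ (r + 1) / (R + 1 - t) ^ (2 * (r + 1))))
            ^ (r + 1) ≤ lam R ∧
      lam R ≤
        ((k : ℝ) * πp /
          ∫ t in (0:ℝ)..1, min 1 ((R ^ 2 + R) ^ (r + 1) / (R + 1 - t) ^ (2 * (r + 1))))
            ^ (r + 1)) :
    Filter.Tendsto lam Filter.atTop (nhds (((k : ℝ) * πp) ^ (r + 1))) := by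
  set p := r + 1 with hp
  have hπp_pos : 0 < πp := by
    rw [hπp]
    have h1 : (0:ℝ) < (r + 1 : ℝ) := by positivity
    have h1' : (1:ℝ) ≤ (r:ℝ) := by exact_mod_cast hr
    have hs : 0 < Real.sin (Real.pi / (r + 1 : ℝ)) := by
      apply Real.sin_pos_of_pos_of_lt_pi
      · positivity
      · rw [div_lt_iff₀ h1]
        nlinarith [Real.pi_pos]
    have hb : (0:ℝ) < ((r + 1 : ℝ) - 1) ^ ((1:ℝ)/(r + 1 : ℝ)) := by
      apply Real.rpow_pos_of_pos
      linarith
    positivity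
  have hk1 : (1:ℝ) ≤ (k:ℝ) := by exact_mod_cast hk
  set c : ℝ := (k:ℝ) * πp with hc
  have hkπ : 0 < c := by nlinarith
  have key : ∀ᶠ R in atTop,
      (c / ((R + 1) / R) ^ p) ^ p ≤ lam R ∧ lam R ≤ (c / (R / (R + 1)) ^ p) ^ p := by
    filter_upwards [eventually_gt_atTop (0:ℝ)] with R hR
    obtain ⟨hZ1, hZ2⟩ := hZhang R hR
    have hR1 : (0:ℝ) < R + 1 := by linarith
    set a : ℝ := (R / (R + 1)) ^ p with ha
    set b : ℝ := ((R + 1) / R) ^ p with hb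
    have ha_pos : 0 < a := by positivity
    have hb_pos : 0 < b := by positivity
    have ha_le_one : a ≤ 1 := by
      apply pow_le_one₀ (by positivity)
      rw [div_le_one hR1]; linarith
    have hone_le_b : 1 ≤ b := by
      apply one_le_pow₀
      rw [le_div_iff₀ hR]; linarith
    have hq_lb : ∀ t ∈ Set.Icc (0:ℝ) 1,
        a ≤ (R ^ 2 + R) ^ p / (R + 1 - t) ^ (2 * p) := by
      intro t ht
      obtain ⟨ht0, ht1⟩ := ht
      have hd : 0 < R + 1 - t := by linarith
      have e1 : a = (R ^ 2 + R) ^ p / ((R + 1) ^ 2) ^ p := by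
        rw [ha, ← div_pow]
        congr 1
        field_simp
      rw [e1, pow_mul]
      gcongr <;> nlinarith
    have hq_ub : ∀ t ∈ Set.Icc (0:ℝ) 1,
        (R ^ 2 + R) ^ p / (R + 1 - t) ^ (2 * p) ≤ b := by
      intro t ht
      obtain ⟨ht0, ht1⟩ := ht
      have hd : 0 < R + 1 - t := by linarith
      have e1 : b = (R ^ 2 + R) ^ p / (R ^ 2) ^ p := by
        rw [hb, ← div_pow]
        congr 1
        field_simp
      rw [e1, pow_mul]
      gcongr <;> nlinarith
    have hcont : ContinuousOn (fun t : ℝ => (R ^ 2 + R) ^ p / (R + 1 - t) ^ (2 * p))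
        (Set.Icc 0 1) := by
      apply ContinuousOn.div continuousOn_const
      · exact (Continuous.pow (by continuity) _).continuousOn
      · intro t ht
        have hd : 0 < R + 1 - t := by
          have := ht.2
          simp only [Set.mem_Icc] at ht
          linarith [ht.2]
        positivity
    have hIcc : Set.uIcc (0:ℝ) 1 = Set.Icc 0 1 := Set.uIcc_of_le (by norm_num)
    have hint_min : IntervalIntegrable
        (fun t => min 1 ((R ^ 2 + R) ^ p / (R + 1 - t) ^ (2 * p)))
        MeasureTheory.volume 0 1 := by
      apply ContinuousOn.intervalIntegrable
      rw [hIcc]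
      exact (continuous_const.min continuous_id).comp_continuousOn hcont
    have hint_max : IntervalIntegrable
        (fun t => max 1 ((R ^ 2 + R) ^ p / (R + 1 - t) ^ (2 * p)))
        MeasureTheory.volume 0 1 := by
      apply ContinuousOn.intervalIntegrable
      rw [hIcc]
      exact (continuous_const.max continuous_id).comp_continuousOn hcont
    have hImin_lb : a ≤ ∫ t in (0:ℝ)..1,
        min 1 ((R ^ 2 + R) ^ p / (R + 1 - t) ^ (2 * p)) := by
      have := intervalIntegral.integral_mono_on (by norm_num : (0:ℝ) ≤ 1)
        (intervalIntegrable_const (c := a)) hint_min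
        (fun t ht => le_min ha_le_one (hq_lb t ht))
      simpa using this
    have hImax_lb : (1:ℝ) ≤ ∫ t in (0:ℝ)..1,
        max 1 ((R ^ 2 + R) ^ p / (R + 1 - t) ^ (2 * p)) := by
      have := intervalIntegral.integral_mono_on (by norm_num : (0:ℝ) ≤ 1)
        (intervalIntegrable_const (c := (1:ℝ))) hint_max
        (fun t _ => le_max_left 1 _)
      simpa using this
    have hImax_ub : (∫ t in (0:ℝ)..1,
        max 1 ((R ^ 2 + R) ^ p / (R + 1 - t) ^ (2 * p))) ≤ b := by
      have := intervalIntegral.integral_mono_on (by norm_num : (0:ℝ) ≤ 1)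
        hint_max (intervalIntegrable_const (c := b))
        (fun t ht => max_le hone_le_b (hq_ub t ht))
      simpa using this
    have hImin_pos : 0 < ∫ t in (0:ℝ)..1,
        min 1 ((R ^ 2 + R) ^ p / (R + 1 - t) ^ (2 * p)) := lt_of_lt_of_le ha_pos hImin_lb
    have hImax_pos : 0 < ∫ t in (0:ℝ)..1,
        max 1 ((R ^ 2 + R) ^ p / (R + 1 - t) ^ (2 * p)) := lt_of_lt_of_le one_pos hImax_lb
    constructor
    · refine le_trans ?_ hZ1
      apply pow_le_pow_left₀ (by positivity)
      exact div_le_div_of_nonneg_left hkπ.le hImax_pos hImax_ub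
    · refine le_trans hZ2 ?_
      apply pow_le_pow_left₀ (div_nonneg hkπ.le hImin_pos.le)
      exact div_le_div_of_nonneg_left hkπ.le ha_pos hImin_lb
  have hL : Tendsto (fun R : ℝ => (c / ((R + 1) / R) ^ p) ^ p) atTop (nhds (c ^ p)) := by
    have h2 : Tendsto (fun R : ℝ => ((R + 1) / R) ^ p) atTop (nhds 1) := by
      have h := aux_tendsto19.pow p
      rwa [one_pow] at h
    have h3 : Tendsto (fun R : ℝ => c / ((R + 1) / R) ^ p) atTop (nhds c) := by
      have h := Tendsto.div (tendsto_const_nhds (x := c)) h2 (one_ne_zero)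
      rwa [div_one] at h
    exact h3.pow p
  have hU : Tendsto (fun R : ℝ => (c / (R / (R + 1)) ^ p) ^ p) atTop (nhds (c ^ p)) := by
    have h1 : Tendsto (fun R : ℝ => R / (R + 1)) atTop (nhds 1) := by
      have h := aux_tendsto19.inv₀ one_ne_zero
      rw [inv_one] at h
      refine h.congr fun R => ?_
      rw [inv_div]
    have h2 : Tendsto (fun R : ℝ => (R / (R + 1)) ^ p) atTop (nhds 1) := by
      have h := h1.pow p
      rwa [one_pow] at h
    have h3 : Tendsto (fun R : ℝ => c / (R / (R + 1)) ^ p) atTop (nhds c) := by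
      have h := Tendsto.div (tendsto_const_nhds (x := c)) h2 (one_ne_zero)
      rwa [div_one] at h
    exact h3.pow p
  exact tendsto_of_tendsto_of_tendsto_of_le_of_le' hL hU
    (key.mono fun R h => h.1) (key.mono fun R h => h.2)
end
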